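/- Let e, h, f be an sl₂-triple in a complex semisimple Lie algebra g, let l ⊆ g(−1) be a Lagrangian subspace for the form (e,[·,·]), and set m = l ⊕ ⊕_{i ≤ −2} g(i). Then m is a Lie subalgebra of g consisting of ad-nilpotent elements, and the map ξ(x) = (x,e) (Killing form pairing) is a Lie algebra homomorphism m → ℂ, i.e., ξ([x,y]) = 0 for all x, y ∈ m. -/

import Mathlib

open Module

section Aux

variable {L : Type*} [LieRing L] [LieAlgebra ℂ L]

private lemma wh_lie_mem_eig (h : L) {a b : ℂ} {x y : L}
    (hx : x ∈ Module.End.eigenspace (LieAlgebra.ad ℂ L h) a)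
    (hy : y ∈ Module.End.eigenspace (LieAlgebra.ad ℂ L h) b) :
    ⁅x, y⁆ ∈ Module.End.eigenspace (LieAlgebra.ad ℂ L h) (a + b) := by
  rw [Module.End.mem_eigenspace_iff] at hx hy ⊢
  change ⁅h, x⁆ = a • x at hx
  change ⁅h, y⁆ = b • y at hy
  change ⁅h, ⁅x, y⁆⁆ = (a + b) • ⁅x, y⁆
  rw [leibniz_lie, hx, hy, smul_lie, lie_smul, add_smul]

private lemma wh_lie_mem_gen (h : L) {a b : ℂ} {x y : L}
    (hx : x ∈ (LieAlgebra.ad ℂ L h).maxGenEigenspace a)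
    (hy : y ∈ (LieAlgebra.ad ℂ L h).maxGenEigenspace b) :
    ⁅x, y⁆ ∈ (LieAlgebra.ad ℂ L h).maxGenEigenspace (a + b) :=
  LieModule.lie_mem_maxGenEigenspace_toEnd hx hy

private lemma wh_killing_eq_zero [FiniteDimensional ℂ L] (e h : L)
    (hhe : ⁅h, e⁆ = (2 : ℂ) • e) {a : ℂ} (ha : a ≠ -2) {z : L}
    (hz : z ∈ Module.End.eigenspace (LieAlgebra.ad ℂ L h) a) :
    killingForm ℂ L z e = 0 := by
  rw [Module.End.mem_eigenspace_iff] at hz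
  have hz' : ⁅h, z⁆ = a • z := hz
  have key : a * killingForm ℂ L z e = -2 * killingForm ℂ L z e := by
    calc a * killingForm ℂ L z e
        = killingForm ℂ L ⁅h, z⁆ e := by rw [hz', map_smul]; rfl
      _ = killingForm ℂ L h ⁅z, e⁆ := LieModule.traceForm_apply_lie_apply ℂ L L h z e
      _ = killingForm ℂ L ⁅z, e⁆ h := LieModule.traceForm_comm ℂ L L _ _
      _ = killingForm ℂ L z ⁅e, h⁆ := LieModule.traceForm_apply_lie_apply ℂ L L z e h
      _ = -2 * killingForm ℂ L z e := by
            rw [← lie_skew, hhe, map_neg, map_smul]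
            simp only [smul_eq_mul]
            ring
  have hz0 : (a + 2) * killingForm ℂ L z e = 0 := by linear_combination key
  rcases mul_eq_zero.mp hz0 with h' | h'
  · exact absurd (by linear_combination h') ha
  · exact h'

private lemma wh_aux_nilp [FiniteDimensional ℂ L] (h x : L)
    (hx : x ∈ ⨆ p : {i : ℤ // i ≤ -1},
      (LieAlgebra.ad ℂ L h).maxGenEigenspace ((p : ℤ) : ℂ)) :
    IsNilpotent (LieAlgebra.ad ℂ L x) := by
  set A := LieAlgebra.ad ℂ L h with hA
  -- finiteness of generalized eigenvalues
  have hfin : {μ : ℂ | A.maxGenEigenspace μ ≠ ⊥}.Finite := by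
    apply A.finite_hasEigenvalue.subset
    intro μ hμ
    obtain ⟨z, hz, hz0⟩ := Submodule.exists_mem_ne_zero_of_ne_bot hμ
    rw [Module.End.mem_maxGenEigenspace] at hz
    obtain ⟨k, hk⟩ := hz
    have hzk : z ∈ A.genEigenspace μ k := Module.End.mem_genEigenspace_nat.mpr hk
    have hne : A.HasGenEigenvalue μ k := by
      intro hbot
      exact hz0 (by rwa [hbot, Submodule.mem_bot] at hzk)
    exact Module.End.hasEigenvalue_of_hasGenEigenvalue hne
  -- integer differences of the spectrum form a finite set
  set D : Set ℤ := {d : ℤ | ∃ μ : ℂ, A.maxGenEigenspace μ ≠ ⊥ ∧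
    A.maxGenEigenspace (μ + d) ≠ ⊥} with hD
  have hDfin : D.Finite := by
    have himg : ((fun d : ℤ => (d : ℂ)) '' D) ⊆
        (fun p : ℂ × ℂ => p.2 - p.1) ''
          ({μ | A.maxGenEigenspace μ ≠ ⊥} ×ˢ {μ | A.maxGenEigenspace μ ≠ ⊥}) := by
      rintro _ ⟨d, ⟨μ, h1, h2⟩, rfl⟩
      exact ⟨(μ, μ + d), ⟨h1, h2⟩, by push_cast; ring⟩
    exact Set.Finite.of_finite_image (((hfin.prod hfin).image _).subset himg)
      (fun a _ b _ hab => Int.cast_injective hab)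
  obtain ⟨b, hb⟩ := hDfin.bddBelow
  set N : ℕ := (-b).toNat + 1 with hN
  have hNb : -(N : ℤ) < b := by omega
  -- the descending filtration
  set F : ℕ → Submodule ℂ L := fun n =>
    ⨆ p : {q : ℂ × ℤ // A.maxGenEigenspace q.1 ≠ ⊥ ∧ q.2 ≤ -(n : ℤ)},
      A.maxGenEigenspace ((p : ℂ × ℤ).1 + ((p : ℂ × ℤ).2 : ℂ)) with hF
  have hF0 : F 0 = ⊤ := by
    rw [eq_top_iff, ← Module.End.iSup_maxGenEigenspace_eq_top A]
    refine iSup_le fun μ => ?_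
    by_cases hμ : A.maxGenEigenspace μ = ⊥
    · rw [hμ]; exact bot_le
    · have : A.maxGenEigenspace μ = A.maxGenEigenspace (μ + ((0 : ℤ) : ℂ)) := by norm_num
      rw [this, hF]
      exact le_iSup (fun p : {q : ℂ × ℤ // A.maxGenEigenspace q.1 ≠ ⊥ ∧ q.2 ≤ -((0:ℕ) : ℤ)} =>
        A.maxGenEigenspace ((p : ℂ × ℤ).1 + ((p : ℂ × ℤ).2 : ℂ))) ⟨(μ, 0), hμ, by norm_num⟩
  have hstep : ∀ n : ℕ, ∀ v ∈ F n, ⁅x, v⁆ ∈ F (n + 1) := by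
    intro n v hv
    rw [hF] at hv
    refine Submodule.iSup_induction _ (motive := fun v => ⁅x, v⁆ ∈ F (n + 1)) hv ?_ (by simp)
      (fun a b ha hb => by
        show ⁅x, a + b⁆ ∈ F (n + 1)
        rw [lie_add]; exact add_mem ha hb)
    rintro ⟨⟨μ, k⟩, hμ, hk⟩ z hz
    refine Submodule.iSup_induction _ (motive := fun w => ⁅w, z⁆ ∈ F (n + 1)) hx ?_ (by simp)
      (fun a b ha hb => by
        show ⁅a + b, z⁆ ∈ F (n + 1)
        rw [add_lie]; exact add_mem ha hb)
    rintro ⟨i, hi⟩ w hw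
    have hmem : ⁅w, z⁆ ∈ A.maxGenEigenspace ((i : ℂ) + (μ + (k : ℂ))) :=
      wh_lie_mem_gen h hw hz
    have heq : (i : ℂ) + (μ + (k : ℂ)) = μ + ((k + i : ℤ) : ℂ) := by push_cast; ring
    rw [heq] at hmem
    rw [hF]
    exact Submodule.mem_iSup_of_mem ⟨(μ, k + i), hμ, by omega⟩ hmem
  have hpow : ∀ n : ℕ, ∀ v, ((LieAlgebra.ad ℂ L x) ^ n) v ∈ F n := by
    intro n
    induction n with
    | zero => intro v; rw [pow_zero]; rw [hF0]; exact Submodule.mem_top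
    | succ n ih =>
      intro v
      rw [pow_succ', Module.End.mul_apply]
      exact hstep n _ (ih v)
  have hFN : F N = ⊥ := by
    rw [hF, iSup_eq_bot]
    rintro ⟨⟨μ, k⟩, hμ, hk⟩
    by_contra hne
    have hkD : k ∈ D := ⟨μ, hμ, hne⟩
    have := hb hkD
    omega
  refine ⟨N, LinearMap.ext fun v => ?_⟩
  have hv := hpow N v
  rw [hFN, Submodule.mem_bot] at hv
  simpa using hv

end Aux

/-- Let `(e, h, f)` be an `sl₂`-triple in a complex semisimple Lie algebra `g`, with
`g(i)` the `ad(h)`-eigenspace of eigenvalue `i`.  Let `l ⊆ g(−1)` be a Lagrangian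
(maximal isotropic) subspace for the symplectic form `(x, y) ↦ κ(e, [x, y])` and set
`m = l ⊕ ⊕_{i ≤ −2} g(i)`.  Then `m` is a Lie subalgebra of `g` consisting of
ad-nilpotent elements, and `ξ(x) = κ(x, e)` is a Lie algebra homomorphism `m → ℂ`,
i.e. `ξ([x, y]) = 0` for all `x, y ∈ m`. -/
theorem whittaker_subalgebra
    {L : Type*} [LieRing L] [LieAlgebra ℂ L]
    [FiniteDimensional ℂ L] [LieAlgebra.IsSemisimple ℂ L]
    (e h f : L)
    (hhe : ⁅h, e⁆ = (2 : ℂ) • e) (hhf : ⁅h, f⁆ = (-2 : ℂ) • f) (hef : ⁅e, f⁆ = h)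
    (l : Submodule ℂ L)
    (hl : l ≤ Module.End.eigenspace (LieAlgebra.ad ℂ L h) (-1))
    -- `l` is isotropic for the form `(x, y) ↦ κ(e, [x, y])` …
    (hiso : ∀ x ∈ l, ∀ y ∈ l, killingForm ℂ L e ⁅x, y⁆ = 0)
    -- … and maximal isotropic (Lagrangian)
    (hmax : ∀ x ∈ Module.End.eigenspace (LieAlgebra.ad ℂ L h) (-1),
      (∀ y ∈ l, killingForm ℂ L e ⁅x, y⁆ = 0) → x ∈ l)
    (m : Submodule ℂ L)
    (hm : m = l ⊔ ⨆ i : ℤ, ⨆ _ : i ≤ -2,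
      Module.End.eigenspace (LieAlgebra.ad ℂ L h) (i : ℂ)) :
    -- `m` is a Lie subalgebra …
    (∀ x ∈ m, ∀ y ∈ m, ⁅x, y⁆ ∈ m) ∧
    -- … consisting of ad-nilpotent elements …
    (∀ x ∈ m, IsNilpotent (LieAlgebra.ad ℂ L x)) ∧
    -- … and `ξ(x) = κ(x, e)` is a Lie algebra character of `m`
    (∀ x ∈ m, ∀ y ∈ m, killingForm ℂ L ⁅x, y⁆ e = 0) := by
  classical
  set A := LieAlgebra.ad ℂ L h with hA
  set S : Submodule ℂ L := ⨆ i : ℤ, ⨆ _ : i ≤ -2, Module.End.eigenspace A (i : ℂ) with hS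
  have hS' : S = ⨆ p : {i : ℤ // i ≤ -2}, Module.End.eigenspace A ((p : ℤ) : ℂ) := by
    rw [hS]; exact iSup_subtype'
  set Te : Submodule ℂ L :=
    ⨆ p : {i : ℤ // i ≤ -1}, Module.End.eigenspace A ((p : ℤ) : ℂ) with hTe
  have hcast : ((-1 : ℤ) : ℂ) = (-1 : ℂ) := by norm_num
  have hlneg : l ≤ Module.End.eigenspace A (((-1 : ℤ) : ℂ)) := by rw [hcast]; exact hl
  have hlTe : l ≤ Te := by
    refine hlneg.trans ?_
    exact le_iSup (fun p : {i : ℤ // i ≤ -1} =>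
      Module.End.eigenspace A ((p : ℤ) : ℂ)) ⟨-1, le_refl _⟩
  have hSTe : S ≤ Te := by
    rw [hS']
    refine iSup_le fun p => ?_
    exact le_iSup (fun p : {i : ℤ // i ≤ -1} =>
      Module.End.eigenspace A ((p : ℤ) : ℂ)) ⟨(p : ℤ), by have := p.2; omega⟩
  have hmTe : m ≤ Te := by rw [hm]; exact sup_le hlTe hSTe
  -- the bracket of two elements of `Te` lies in `S`
  have hbr : ∀ x ∈ Te, ∀ y ∈ Te, ⁅x, y⁆ ∈ S := by
    intro x hx
    rw [hTe] at hx
    refine Submodule.iSup_induction _ (motive := fun x => ∀ y ∈ Te, ⁅x, y⁆ ∈ S) hx ?_ ?_ ?_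
    · rintro ⟨i, hi⟩ x hxi y hy
      rw [hTe] at hy
      refine Submodule.iSup_induction _ (motive := fun y => ⁅x, y⁆ ∈ S) hy ?_ ?_ ?_
      · rintro ⟨j, hj⟩ y hyj
        have hmem := wh_lie_mem_eig h hxi hyj
        have heq : ((i : ℂ) + (j : ℂ)) = ((i + j : ℤ) : ℂ) := by push_cast; ring
        rw [heq] at hmem
        rw [hS']
        exact Submodule.mem_iSup_of_mem ⟨i + j, by omega⟩ hmem
      · show ⁅x, (0 : L)⁆ ∈ S
        rw [lie_zero]; exact zero_mem S
      · intro u v hu hv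
        show ⁅x, u + v⁆ ∈ S
        rw [lie_add]; exact add_mem hu hv
    · intro y _
      show ⁅(0 : L), y⁆ ∈ S
      rw [zero_lie]; exact zero_mem S
    · intro u v hu hv y hy
      show ⁅u + v, y⁆ ∈ S
      rw [add_lie]; exact add_mem (hu y hy) (hv y hy)
  refine ⟨?_, ?_, ?_⟩
  · -- Lie subalgebra
    intro x hx y hy
    rw [hm]
    exact Submodule.mem_sup_right (hbr x (hmTe hx) y (hmTe hy))
  · -- ad-nilpotency
    intro x hx
    have hle : Te ≤ ⨆ p : {i : ℤ // i ≤ -1}, A.maxGenEigenspace ((p : ℤ) : ℂ) := by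
      rw [hTe]
      exact iSup_mono fun p => (A.genEigenspace _).monotone le_top
    exact wh_aux_nilp h x (hle (hmTe hx))
  · -- character property
    have horth : ∀ {a : ℂ}, a ≠ -2 → ∀ z ∈ Module.End.eigenspace A a,
        killingForm ℂ L z e = 0 := fun ha z hz => wh_killing_eq_zero e h hhe ha hz
    have stepL : ∀ c ∈ l, ∀ x ∈ m, killingForm ℂ L ⁅x, c⁆ e = 0 := by
      intro c hc x hxm
      rw [hm] at hxm
      obtain ⟨p, hp, q, hq, rfl⟩ := Submodule.mem_sup.mp hxm
      have h1 : killingForm ℂ L ⁅p, c⁆ e = 0 := by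
        rw [LieModule.traceForm_comm ℂ L L ⁅p, c⁆ e]
        exact hiso p hp c hc
      have h2 : killingForm ℂ L ⁅q, c⁆ e = 0 := by
        rw [hS'] at hq
        refine Submodule.iSup_induction _
          (motive := fun w => killingForm ℂ L ⁅w, c⁆ e = 0) hq ?_ (by simp) ?_
        · rintro ⟨j, hj⟩ w hw
          have hmem := wh_lie_mem_eig h hw (hlneg hc)
          refine horth ?_ _ hmem
          intro hcontra
          have hj' : (j : ℤ) = -1 := by
            exact_mod_cast show ((j : ℤ) : ℂ) = ((-1 : ℤ) : ℂ) by
              push_cast at hcontra ⊢; linear_combination hcontra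
          omega
        · intro u v hu hv
          show killingForm ℂ L ⁅u + v, c⁆ e = 0
          rw [add_lie, map_add, LinearMap.add_apply, hu, hv, add_zero]
      show killingForm ℂ L ⁅p + q, c⁆ e = 0
      rw [add_lie, map_add, LinearMap.add_apply, h1, h2, add_zero]
    have stepS : ∀ d ∈ S, ∀ x ∈ m, killingForm ℂ L ⁅x, d⁆ e = 0 := by
      intro d hd
      rw [hS'] at hd
      refine Submodule.iSup_induction _
        (motive := fun d => ∀ x ∈ m, killingForm ℂ L ⁅x, d⁆ e = 0) hd ?_ ?_ ?_
      · rintro ⟨j, hj⟩ d hdj x hxm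
        rw [hm] at hxm
        obtain ⟨p, hp, q, hq, rfl⟩ := Submodule.mem_sup.mp hxm
        have h1 : killingForm ℂ L ⁅p, d⁆ e = 0 := by
          have hmem := wh_lie_mem_eig h (hlneg hp) hdj
          refine horth ?_ _ hmem
          intro hcontra
          have hj' : (j : ℤ) = -1 := by
            exact_mod_cast show ((j : ℤ) : ℂ) = ((-1 : ℤ) : ℂ) by
              push_cast at hcontra ⊢; linear_combination hcontra
          omega
        have h2 : killingForm ℂ L ⁅q, d⁆ e = 0 := by
          rw [hS'] at hq
          refine Submodule.iSup_induction _
            (motive := fun w => killingForm ℂ L ⁅w, d⁆ e = 0) hq ?_ (by simp) ?_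
          · rintro ⟨i, hi⟩ w hw
            have hmem := wh_lie_mem_eig h hw hdj
            refine horth ?_ _ hmem
            intro hcontra
            have hij : (i : ℤ) + j = -2 := by
              exact_mod_cast show (((i : ℤ) + j : ℤ) : ℂ) = ((-2 : ℤ) : ℂ) by
                push_cast at hcontra ⊢; linear_combination hcontra
            omega
          · intro u v hu hv
            show killingForm ℂ L ⁅u + v, d⁆ e = 0
            rw [add_lie, map_add, LinearMap.add_apply, hu, hv, add_zero]
        show killingForm ℂ L ⁅p + q, d⁆ e = 0
        rw [add_lie, map_add, LinearMap.add_apply, h1, h2, add_zero]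
      · intro x _
        show killingForm ℂ L ⁅x, (0 : L)⁆ e = 0
        rw [lie_zero, map_zero, LinearMap.zero_apply]
      · intro u v hu hv x hxm
        show killingForm ℂ L ⁅x, u + v⁆ e = 0
        rw [lie_add, map_add, LinearMap.add_apply, hu x hxm, hv x hxm, add_zero]
    intro x hx y hy
    rw [hm] at hy
    obtain ⟨c, hc, d, hd, rfl⟩ := Submodule.mem_sup.mp hy
    rw [lie_add, map_add, LinearMap.add_apply, stepL c hc x hx, stepS d hd x hx, add_zero]
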